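/- For real n ≥ 1, s ≥ 2 and integer r = ⌈n/(s+1)⌉ with r ≥ 4, we have ψ(n+s-r+2) - ψ(n-r) - (ψ(n+s) - ψ(n)) > 2/(n-r+1) + ((r-2)s+1)/((n-1)(n+s-1)), provided n, s are integers (so that ψ differences are finite sums of reciprocals) and n - r > 0. -/

import Mathlib

/-- The digamma function `ψ = Γ'/Γ`, as the derivative of `log ∘ Γ`. -/
noncomputable def digamma (x : ℝ) : ℝ := deriv (fun y : ℝ => Real.log (Real.Gamma y)) x

lemma digamma_add_one {x : ℝ} (hx : 0 < x) : digamma (x + 1) = digamma x + 1 / x := by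
  have hΓ : ∀ y : ℝ, 0 < y → DifferentiableAt ℝ Real.Gamma y := by
    intro y hy
    exact Real.differentiableAt_Gamma (fun m =>
      ne_of_gt (lt_of_le_of_lt (neg_nonpos.mpr (Nat.cast_nonneg m)) hy))
  have hlogΓ : ∀ y : ℝ, 0 < y →
      DifferentiableAt ℝ (fun z : ℝ => Real.log (Real.Gamma z)) y := by
    intro y hy
    exact (hΓ y hy).log (Real.Gamma_pos_of_pos hy).ne'
  have hev : (fun y : ℝ => Real.log (Real.Gamma (y + 1))) =ᶠ[nhds x]
      (fun y : ℝ => Real.log y + Real.log (Real.Gamma y)) := by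
    filter_upwards [eventually_gt_nhds hx] with y hy
    rw [Real.Gamma_add_one hy.ne', Real.log_mul hy.ne' (Real.Gamma_pos_of_pos hy).ne']
  have h1 : deriv (fun y : ℝ => Real.log (Real.Gamma (y + 1))) x =
      deriv (fun y : ℝ => Real.log y + Real.log (Real.Gamma y)) x := hev.deriv_eq
  rw [deriv_comp_add_const (fun y : ℝ => Real.log (Real.Gamma y)) 1 x] at h1
  rw [deriv_fun_add (Real.differentiableAt_log hx.ne') (hlogΓ x hx)] at h1
  simp only [digamma]
  rw [h1, Real.deriv_log x]
  ring

lemma digamma_sum (k : ℕ) (hk : 1 ≤ k) (m : ℕ) :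
    digamma ((k : ℝ) + m) - digamma k = ∑ i ∈ Finset.range m, 1 / ((k : ℝ) + i) := by
  induction m with
  | zero => simp
  | succ m ih =>
    have hpos : (0 : ℝ) < (k : ℝ) + m := by positivity
    have : ((k : ℝ) + (m + 1 : ℕ)) = ((k : ℝ) + m) + 1 := by push_cast; ring
    rw [this, digamma_add_one hpos, Finset.sum_range_succ, ← ih]
    ring

theorem stmt_18 (n s r : ℕ) (hn : 1 ≤ n) (hs : 2 ≤ s)
    (hr : r = (n + s) / (s + 1)) (hr4 : 4 ≤ r) (hnr : r < n) :
    digamma (n + s - r + 2) - digamma (n - r : ℕ) - (digamma (n + s) - digamma n) >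
      2 / ((n : ℝ) - r + 1) + (((r : ℝ) - 2) * s + 1) / (((n : ℝ) - 1) * (n + s - 1)) := by
  set a : ℝ := (n : ℝ) with ha
  set b : ℝ := (s : ℝ) with hb
  set c : ℝ := (r : ℝ) with hc
  have hb2 : (2 : ℝ) ≤ b := by rw [hb]; exact_mod_cast hs
  have hc4 : (4 : ℝ) ≤ c := by rw [hc]; exact_mod_cast hr4
  have hac : c + 1 ≤ a := by
    rw [hc, ha]
    exact_mod_cast hnr
  have hNR : ((n - r : ℕ) : ℝ) = a - c := by
    rw [Nat.cast_sub hnr.le]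
  have hNR1 : 1 ≤ n - r := by omega
  have e1 : a + b - c + 2 = ((n - r : ℕ) : ℝ) + ((s + 2 : ℕ) : ℝ) := by
    rw [hNR]; push_cast; ring
  have e2 : a + b = ((n : ℕ) : ℝ) + ((s : ℕ) : ℝ) := rfl
  have d1 : digamma (a + b - c + 2) - digamma ((n - r : ℕ) : ℝ) =
      ∑ i ∈ Finset.range (s + 2), 1 / (a - c + i) := by
    rw [e1, digamma_sum (n - r) hNR1 (s + 2)]
    exact Finset.sum_congr rfl fun i _ => by rw [hNR]
  have d2 : digamma (a + b) - digamma a =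
      ∑ i ∈ Finset.range s, 1 / (a + i) := by
    rw [e2, digamma_sum n hn s]
  rw [d1, d2]
  -- split off the first two terms of the big sum
  have hsplit : ∑ i ∈ Finset.range (s + 2), 1 / (a - c + i) =
      (∑ i ∈ Finset.range s, 1 / (a - c + 2 + i)) + 1 / (a - c) + 1 / (a - c + 1) := by
    rw [Finset.sum_range_succ' (fun i => 1 / (a - c + i)) (s + 1),
      Finset.sum_range_succ' (fun i => 1 / (a - c + ((i + 1 : ℕ) : ℝ))) s]
    push_cast
    have hcg : ∑ i ∈ Finset.range s, 1 / (a - c + ((i : ℝ) + 1 + 1)) =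
        ∑ i ∈ Finset.range s, 1 / (a - c + 2 + i) :=
      Finset.sum_congr rfl fun i _ => by ring_nf
    rw [hcg]
    ring
  rw [hsplit]
  -- telescoping identity
  have htel : ∑ i ∈ Finset.range s, (1 / (a - 1 + i) - 1 / (a + i)) =
      1 / (a - 1) - 1 / (a + b - 1) := by
    have h0 := Finset.sum_range_sub' (fun i : ℕ => 1 / (a - 1 + i)) s
    have heq : ∀ i ∈ Finset.range s, (1 / (a - 1 + i) - 1 / (a + i)) =
        (fun i : ℕ => 1 / (a - 1 + i)) i - (fun i : ℕ => 1 / (a - 1 + i)) (i + 1) := by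
      intro i _
      simp only
      push_cast
      ring_nf
    rw [Finset.sum_congr rfl heq, h0]
    have : a - 1 + (s : ℝ) = a + b - 1 := by rw [hb]; ring
    rw [this]
    norm_num
  have ha5 : (5 : ℝ) ≤ a := by linarith
  have hacpos : (1 : ℝ) ≤ a - c := by linarith
  have habpos : (0 : ℝ) < a + b - 1 := by linarith
  have ha1pos : (0 : ℝ) < a - 1 := by linarith
  have hrhs : ((c - 2) * b + 1) / ((a - 1) * (a + b - 1)) =
      (c - 2) * (1 / (a - 1) - 1 / (a + b - 1)) + 1 / ((a - 1) * (a + b - 1)) := by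
    field_simp
    ring
  rw [hrhs, ← htel, Finset.mul_sum]
  have hterm : ∀ i ∈ Finset.range s,
      (c - 2) * (1 / (a - 1 + i) - 1 / (a + i)) < 1 / (a - c + 2 + i) - 1 / (a + i) := by
    intro i _
    have hi0 : (0 : ℝ) ≤ i := Nat.cast_nonneg i
    have p1 : (0 : ℝ) < a - 1 + i := by linarith
    have p2 : (0 : ℝ) < a + i := by linarith
    have p3 : (0 : ℝ) < a - c + 2 + i := by linarith
    have e3 : 1 / (a - c + 2 + i) - 1 / (a + i) = (c - 2) / ((a - c + 2 + i) * (a + i)) := by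
      field_simp
      ring
    have e4 : (c - 2) * (1 / (a - 1 + i) - 1 / (a + i)) =
        (c - 2) / ((a - 1 + i) * (a + i)) := by
      field_simp
      ring
    rw [e3, e4]
    apply div_lt_div_of_pos_left (by linarith) (by positivity)
    exact mul_lt_mul_of_pos_right (by linarith) p2
  have hsum : ∑ i ∈ Finset.range s, (c - 2) * (1 / (a - 1 + i) - 1 / (a + i)) <
      ∑ i ∈ Finset.range s, (1 / (a - c + 2 + i) - 1 / (a + i)) :=
    Finset.sum_lt_sum_of_nonempty (by simp; omega) hterm
  rw [Finset.sum_sub_distrib] at hsum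
  have hgap : 1 / ((a - 1) * (a + b - 1)) ≤ 1 / (a - c) - 1 / (a - c + 1) := by
    have e5 : 1 / (a - c) - 1 / (a - c + 1) = 1 / ((a - c) * (a - c + 1)) := by
      field_simp
      ring
    rw [e5]
    apply one_div_le_one_div_of_le (by positivity)
    exact mul_le_mul (by linarith) (by linarith) (by linarith) (by linarith)
  have h2 : 2 / (a - c + 1) = 1 / (a - c + 1) + 1 / (a - c + 1) := by ring
  linarith
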